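/- Let G = (V, ∼) be a connected finite distance-regular graph, let W be a finite set, let ε > 0, and let M' : V → (V ⊕ W) → ℝ be a channel matrix satisfying ε-differential privacy with respect to ∼ such that M' i (inl i) = max_{h ∈ V} M' h (inl i) for every i ∈ V (column maxima on the diagonal) and M' i (inr w) = 0 for all i ∈ V, w ∈ W. Then there exists a channel matrix M'' : V → (V ⊕ W) → ℝ such that: (i) for every i ∈ V, M'' i (inl i) equals the maximum entry of M'' (in particular all diagonal entries are equal to the global maximum); (ii) M'' i (inr w) = 0 for all i ∈ V, w ∈ W; (iii) M'' satisfies ε-differential privacy with respect to ∼; (iv) ∑_{b ∈ V ⊕ W} max_{i ∈ V} M'' i b = ∑_{b ∈ V ⊕ W} max_{i ∈ V} M' i b. -/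

import Mathlib

/-- A connected finite graph is distance-regular if there are intersection numbers
`b d` and `c d` such that every vertex `y` at graph distance `d` from `x` has exactly
`b d` neighbors at distance `d + 1` from `x` and exactly `c d` neighbors at distance
`d - 1` from `x`. -/
def IsDistRegular {V : Type*} [Fintype V] (G : SimpleGraph V) : Prop :=
  ∃ b c : ℕ → ℕ, ∀ x y : V, ∀ d : ℕ, G.dist x y = d →
    Nat.card {w : V // G.Adj y w ∧ G.dist x w = d + 1} = b d ∧
    Nat.card {w : V // G.Adj y w ∧ G.dist x w = d - 1} = c d

open Finset

namespace DPAux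

variable {V : Type*} [Fintype V] (G : SimpleGraph V)

open Classical in
noncomputable def sph (j : V) (d : ℕ) : Finset V :=
  univ.filter (fun x => G.dist j x = d)

open Classical in
lemma mem_sph {j x : V} {d : ℕ} : x ∈ sph G j d ↔ G.dist j x = d := by
  simp [sph]

open Classical in
lemma sum_sph {M : Type*} [AddCommMonoid M] (j : V) (n : ℕ) (hn : ∀ x, G.dist j x < n)
    (g : V → M) : ∑ d ∈ Finset.range n, ∑ x ∈ sph G j d, g x = ∑ x, g x := by
  unfold sph
  exact Finset.sum_fiberwise_of_maps_to (fun x _ => Finset.mem_range.mpr (hn x)) g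

omit [Fintype V] in
lemma exists_adj_dist (hconn : G.Connected) {x y : V} {d : ℕ} (h : G.dist x y = d + 1) :
    ∃ z, G.Adj y z ∧ G.dist x z = d := by
  have h' : G.dist y x = d + 1 := by rwa [SimpleGraph.dist_comm]
  obtain ⟨p, hp⟩ := SimpleGraph.exists_walk_of_dist_ne_zero (by omega : G.dist y x ≠ 0)
  cases p with
  | nil => simp at h'
  | @cons _ z _ ha q =>
    refine ⟨z, ha, ?_⟩
    have hq : q.length = d := by
      simp only [SimpleGraph.Walk.length_cons, h'] at hp; omega
    have h1 : G.dist z x ≤ d := hq ▸ SimpleGraph.dist_le q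
    have h2 : G.dist y z ≤ 1 := by
      rw [SimpleGraph.dist_eq_one_iff_adj.mpr ha]
    have h3 : G.dist y x ≤ G.dist y z + G.dist z x := hconn.dist_triangle
    rw [SimpleGraph.dist_comm]
    omega

omit [Fintype V] in
open Classical in
lemma swap_sum {M : Type*} [AddCommMonoid M] (A B : Finset V) (g : V → V → M) :
    ∑ y ∈ A, ∑ z ∈ B.filter (fun z => G.Adj y z), g y z
      = ∑ z ∈ B, ∑ y ∈ A.filter (fun y => G.Adj y z), g y z := by
  simp only [sum_filter]
  exact Finset.sum_comm

section DR

variable (bb cc : ℕ → ℕ)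
  (hbc : ∀ x y : V, ∀ d : ℕ, G.dist x y = d →
    Nat.card {w : V // G.Adj y w ∧ G.dist x w = d + 1} = bb d ∧
    Nat.card {w : V // G.Adj y w ∧ G.dist x w = d - 1} = cc d)

include hbc

open Classical in
lemma card_b {j y : V} {d : ℕ} (hd : G.dist j y = d) :
    ((sph G j (d+1)).filter (fun z => G.Adj y z)).card = bb d := by
  have h := (hbc j y d hd).1
  rw [Nat.card_eq_fintype_card, Fintype.card_subtype] at h
  rw [← h]
  congr 1
  ext z
  simp [sph, and_comm]

open Classical in
lemma card_c {j z : V} {d : ℕ} (hd : G.dist j z = d + 1) :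
    ((sph G j d).filter (fun y => G.Adj y z)).card = cc (d+1) := by
  have h := (hbc j z (d+1) hd).2
  rw [Nat.card_eq_fintype_card, Fintype.card_subtype] at h
  rw [← h]
  congr 1
  ext y
  simp only [sph, mem_filter, mem_univ, true_and, Nat.add_sub_cancel]
  constructor
  · rintro ⟨h1, h2⟩; exact ⟨h2.symm, h1⟩
  · rintro ⟨h1, h2⟩; exact ⟨h2, h1.symm⟩

open Classical in
lemma count_eq (j : V) (d : ℕ) :
    (sph G j d).card * bb d = (sph G j (d+1)).card * cc (d+1) := by
  have h1 : ∑ y ∈ sph G j d, ((sph G j (d+1)).filter (fun z => G.Adj y z)).card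
      = (sph G j d).card * bb d := by
    rw [Finset.sum_congr rfl (fun y hy => card_b G bb cc hbc ((mem_sph G).mp hy))]
    simp [mul_comm]
  have h2 : ∑ z ∈ sph G j (d+1), ((sph G j d).filter (fun y => G.Adj y z)).card
      = (sph G j (d+1)).card * cc (d+1) := by
    rw [Finset.sum_congr rfl (fun z hz => card_c G bb cc hbc ((mem_sph G).mp hz))]
    simp [mul_comm]
  rw [← h1, ← h2]
  simpa only [Finset.card_eq_sum_ones] using
    swap_sum G (sph G j d) (sph G j (d+1)) (fun _ _ => (1 : ℕ))

open Classical in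
lemma sph_card_eq (hconn : G.Connected) (j j' : V) (d : ℕ) :
    (sph G j d).card = (sph G j' d).card := by
  induction d generalizing j j' with
  | zero =>
    have h : ∀ i : V, sph G i 0 = {i} := by
      intro i; ext x
      simp [mem_sph, hconn.dist_eq_zero_iff, eq_comm]
    rw [h j, h j']; simp
  | succ d ih =>
    by_cases hc : cc (d+1) = 0
    · have hempty : ∀ i : V, (sph G i (d+1)).card = 0 := by
        intro i
        rw [Finset.card_eq_zero]
        by_contra hne
        obtain ⟨z, hz⟩ := Finset.nonempty_iff_ne_empty.mpr hne
        obtain ⟨y, hy, hyd⟩ := DPAux.exists_adj_dist G hconn ((mem_sph G).mp hz)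
        have hcc := card_c G bb cc hbc ((mem_sph G).mp hz)
        rw [hc, Finset.card_eq_zero] at hcc
        have : y ∈ (sph G i d).filter (fun y => G.Adj y z) := by
          simp [mem_sph, hyd, hy.symm, DPAux.sph]
        rw [hcc] at this
        exact absurd this (Finset.notMem_empty y)
      rw [hempty j, hempty j']
    · have e1 := count_eq G bb cc hbc j d
      have e2 := count_eq G bb cc hbc j' d
      rw [ih j j'] at e1
      exact Nat.eq_of_mul_eq_mul_right (Nat.pos_of_ne_zero hc) (e1.symm.trans e2)

end DR

end DPAux

theorem dp_transform_distRegular' {V W : Type*} [Fintype V] [Fintype W]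
    (G : SimpleGraph V) (hconn : G.Connected) (hdr : ∃ b c : ℕ → ℕ, ∀ x y : V, ∀ d : ℕ, G.dist x y = d →
      Nat.card {w : V // G.Adj y w ∧ G.dist x w = d + 1} = b d ∧
      Nat.card {w : V // G.Adj y w ∧ G.dist x w = d - 1} = c d)
    (ε : ℝ) (hε : 0 < ε) (M' : V → (V ⊕ W) → ℝ)
    (hnn : ∀ i b, 0 ≤ M' i b) (hrow : ∀ i, ∑ b, M' i b = 1)
    (hdp : ∀ i h, G.Adj i h → ∀ b, M' i b ≤ Real.exp ε * M' h b)
    (hdiag : ∀ i h : V, M' h (Sum.inl i) ≤ M' i (Sum.inl i))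
    (hzero : ∀ i w, M' i (Sum.inr w) = 0) :
    ∃ M'' : V → (V ⊕ W) → ℝ,
      (∀ i b, 0 ≤ M'' i b) ∧
      (∀ i, ∑ b, M'' i b = 1) ∧
      (∀ i h : V, ∀ b : V ⊕ W, M'' h b ≤ M'' i (Sum.inl i)) ∧
      (∀ i w, M'' i (Sum.inr w) = 0) ∧
      (∀ i h, G.Adj i h → ∀ b, M'' i b ≤ Real.exp ε * M'' h b) ∧
      (∑ b, ⨆ i, M'' i b) = (∑ b, ⨆ i, M' i b) := by
  classical
  obtain ⟨bb, cc, hbc⟩ := hdr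
  haveI : Nonempty V := hconn.nonempty
  set N : ℕ := Fintype.card V with hNdef
  have hNpos : 0 < N := Fintype.card_pos
  have hNne : (N : ℝ) ≠ 0 := Nat.cast_ne_zero.mpr hNpos.ne'
  set j₀ : V := Classical.arbitrary V with hj₀
  set K : ℕ → ℕ := fun d => (DPAux.sph G j₀ d).card with hKdef
  have hK : ∀ (j : V) (d : ℕ), (DPAux.sph G j d).card = K d :=
    fun j d => DPAux.sph_card_eq G bb cc hbc hconn j j₀ d
  set S : ℕ → ℝ := fun d => ∑ j, ∑ x ∈ DPAux.sph G j d, M' x (Sum.inl j) with hSdef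
  set f : ℕ → ℝ := fun d => S d / (N * K d) with hfdef
  set t : ℝ := ∑ j, M' j (Sum.inl j) with htdef
  have htnn : 0 ≤ t := Finset.sum_nonneg fun j _ => hnn j _
  have hSnn : ∀ d, 0 ≤ S d :=
    fun d => Finset.sum_nonneg fun j _ => Finset.sum_nonneg fun x _ => hnn x _
  have hfnn : ∀ d, 0 ≤ f d := fun d => div_nonneg (hSnn d) (mul_nonneg (Nat.cast_nonneg _) (Nat.cast_nonneg _))
  have hsph0 : ∀ j : V, DPAux.sph G j 0 = {j} := by
    intro j; ext x
    simp [DPAux.mem_sph, hconn.dist_eq_zero_iff, eq_comm]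
  have hK0 : K 0 = 1 := by rw [hKdef]; simp [hsph0 j₀]
  have hS0 : S 0 = t := by
    rw [hSdef, htdef]
    exact Finset.sum_congr rfl fun j _ => by rw [hsph0 j, Finset.sum_singleton]
  have hf0 : f 0 = t / N := by rw [hfdef]; simp [hS0, hK0]
  have hSempty : ∀ d, K d = 0 → S d = 0 := by
    intro d hd
    rw [hSdef]
    refine Finset.sum_eq_zero fun j _ => ?_
    have : DPAux.sph G j d = ∅ := Finset.card_eq_zero.mp ((hK j d).trans hd)
    rw [this, Finset.sum_empty]
  have hKd : ∀ j i : V, 0 < K (G.dist j i) := by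
    intro j i
    rw [← hK j]
    exact Finset.card_pos.mpr ⟨i, (DPAux.mem_sph G).mpr rfl⟩
  have hSle : ∀ d, S d ≤ (K d : ℝ) * t := by
    intro d
    calc S d ≤ ∑ j, ∑ _x ∈ DPAux.sph G j d, M' j (Sum.inl j) :=
          Finset.sum_le_sum fun j _ => Finset.sum_le_sum fun x _ => hdiag j x
      _ = ∑ j, (K d : ℝ) * M' j (Sum.inl j) := by
          refine Finset.sum_congr rfl fun j _ => ?_
          rw [Finset.sum_const, hK j d, nsmul_eq_mul]
      _ = (K d : ℝ) * t := by rw [← Finset.mul_sum, htdef]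
  have hfle : ∀ d, f d ≤ t / N := by
    intro d
    rcases Nat.eq_zero_or_pos (K d) with h0 | hpos
    · rw [hfdef]
      simp only [hSempty d h0, zero_div]
      positivity
    · have hKne : (K d : ℝ) ≠ 0 := Nat.cast_ne_zero.mpr hpos.ne'
      rw [hfdef]
      have hden : (0:ℝ) < (N : ℝ) * K d := mul_pos (Nat.cast_pos.mpr hNpos) (Nat.cast_pos.mpr hpos)
      calc S d / ((N:ℝ) * K d) ≤ ((K d : ℝ) * t) / ((N:ℝ) * K d) :=
            div_le_div_of_nonneg_right (hSle d) hden.le |>.trans_eq rfl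
        _ = t / N := by field_simp
  have hdlt : ∀ j i : V, G.dist j i < N := by
    intro j i
    obtain ⟨p, hp, hl⟩ := hconn.exists_path_of_dist j i
    exact hl ▸ hp.length_lt
  have hrowV : ∀ x : V, ∑ j : V, M' x (Sum.inl j) = 1 := by
    intro x
    have h := hrow x
    rw [Fintype.sum_sum_type] at h
    simpa [hzero] using h
  have hSsum : ∑ d ∈ Finset.range N, S d = (N : ℝ) := by
    rw [hSdef]
    rw [Finset.sum_comm]
    calc ∑ j : V, ∑ d ∈ Finset.range N, ∑ x ∈ DPAux.sph G j d, M' x (Sum.inl j)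
        = ∑ j : V, ∑ x : V, M' x (Sum.inl j) := by
          refine Finset.sum_congr rfl fun j _ => ?_
          exact DPAux.sum_sph G j N (fun x => hdlt j x) _
      _ = ∑ x : V, ∑ j : V, M' x (Sum.inl j) := Finset.sum_comm
      _ = ∑ _x : V, (1:ℝ) := Finset.sum_congr rfl fun x _ => hrowV x
      _ = (N : ℝ) := by simp [hNdef]
  have hKf : ∀ d, (K d : ℝ) * f d = S d / N := by
    intro d
    rcases Nat.eq_zero_or_pos (K d) with h0 | hpos
    · simp [h0, hSempty d h0]
    · have hKne : (K d : ℝ) ≠ 0 := Nat.cast_ne_zero.mpr hpos.ne'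
      rw [hfdef]
      field_simp
  have hrowsum : ∀ i : V, ∑ j : V, f (G.dist j i) = 1 := by
    intro i
    have hcard : ∀ d, (univ.filter (fun j : V => G.dist j i = d)).card = K d := by
      intro d
      rw [← hK i]
      congr 1
      ext j
      simp [DPAux.sph, SimpleGraph.dist_comm]
    have hfib := Finset.sum_fiberwise_of_maps_to'
      (s := (univ : Finset V)) (t := Finset.range N) (g := fun j => G.dist j i)
      (fun j _ => Finset.mem_range.mpr (hdlt j i)) f
    rw [← hfib]
    calc ∑ d ∈ Finset.range N, ∑ _j ∈ univ.filter (fun j : V => G.dist j i = d), f d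
        = ∑ d ∈ Finset.range N, (K d : ℝ) * f d := by
          refine Finset.sum_congr rfl fun d _ => ?_
          rw [Finset.sum_const, hcard d, nsmul_eq_mul]
      _ = ∑ d ∈ Finset.range N, S d / N := Finset.sum_congr rfl fun d _ => hKf d
      _ = (∑ d ∈ Finset.range N, S d) / N := by rw [Finset.sum_div]
      _ = 1 := by rw [hSsum]; exact div_self hNne
  have hT1 : ∀ d, ∑ j : V, ∑ y ∈ DPAux.sph G j d,
      ∑ z ∈ (DPAux.sph G j (d+1)).filter (fun z => G.Adj y z), M' y (Sum.inl j)
        = (bb d : ℝ) * S d := by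
    intro d
    rw [hSdef, Finset.mul_sum]
    refine Finset.sum_congr rfl fun j _ => ?_
    rw [Finset.mul_sum]
    refine Finset.sum_congr rfl fun y hy => ?_
    rw [Finset.sum_const, DPAux.card_b G bb cc hbc ((DPAux.mem_sph G).mp hy), nsmul_eq_mul]
  have hT2 : ∀ d, ∑ j : V, ∑ z ∈ DPAux.sph G j (d+1),
      ∑ y ∈ (DPAux.sph G j d).filter (fun y => G.Adj y z), M' z (Sum.inl j)
        = (cc (d+1) : ℝ) * S (d+1) := by
    intro d
    rw [hSdef, Finset.mul_sum]
    refine Finset.sum_congr rfl fun j _ => ?_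
    rw [Finset.mul_sum]
    refine Finset.sum_congr rfl fun z hz => ?_
    rw [Finset.sum_const, DPAux.card_c G bb cc hbc ((DPAux.mem_sph G).mp hz), nsmul_eq_mul]
  have hkey : ∀ d, (bb d : ℝ) * S d ≤ Real.exp ε * ((cc (d+1) : ℝ) * S (d+1))
      ∧ (cc (d+1) : ℝ) * S (d+1) ≤ Real.exp ε * ((bb d : ℝ) * S d) := by
    intro d
    constructor
    · rw [← hT1 d, ← hT2 d]
      rw [Finset.mul_sum]
      refine Finset.sum_le_sum fun j _ => ?_
      rw [DPAux.swap_sum G (DPAux.sph G j d) (DPAux.sph G j (d+1))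
        (fun y z => M' y (Sum.inl j))]
      rw [Finset.mul_sum]
      refine Finset.sum_le_sum fun z _ => ?_
      rw [Finset.mul_sum]
      refine Finset.sum_le_sum fun y hy => ?_
      exact hdp y z (Finset.mem_filter.mp hy).2 (Sum.inl j)
    · rw [← hT1 d, ← hT2 d]
      rw [Finset.mul_sum]
      refine Finset.sum_le_sum fun j _ => ?_
      rw [DPAux.swap_sum G (DPAux.sph G j d) (DPAux.sph G j (d+1))
        (fun y z => M' y (Sum.inl j))]
      rw [Finset.mul_sum]
      refine Finset.sum_le_sum fun z _ => ?_
      rw [Finset.mul_sum]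
      refine Finset.sum_le_sum fun y hy => ?_
      exact hdp z y (Finset.mem_filter.mp hy).2.symm (Sum.inl j)
  have hcountK : ∀ d, (K d : ℝ) * bb d = (K (d+1) : ℝ) * cc (d+1) := by
    intro d
    have h := DPAux.count_eq G bb cc hbc j₀ d
    exact_mod_cast h
  have hstep : ∀ d : ℕ, 0 < K d → 0 < K (d+1) →
      f d ≤ Real.exp ε * f (d+1) ∧ f (d+1) ≤ Real.exp ε * f d := by
    intro d hK1 hK2
    obtain ⟨z, hz⟩ := Finset.card_pos.mp (by rw [hK j₀]; exact hK2 :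
      0 < (DPAux.sph G j₀ (d+1)).card)
    obtain ⟨y, hy, hyd⟩ := DPAux.exists_adj_dist G hconn ((DPAux.mem_sph G).mp hz)
    have hcpos : 0 < cc (d+1) := by
      rw [← DPAux.card_c G bb cc hbc ((DPAux.mem_sph G).mp hz)]
      refine Finset.card_pos.mpr ⟨y, Finset.mem_filter.mpr ⟨(DPAux.mem_sph G).mpr hyd, hy.symm⟩⟩
    have hbpos : 0 < bb d := by
      rcases Nat.eq_zero_or_pos (bb d) with h0 | h; swap
      · exact h
      · exfalso
        have h := DPAux.count_eq G bb cc hbc j₀ d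
        rw [h0, Nat.mul_zero] at h
        rw [hK j₀ (d+1)] at h
        have := Nat.mul_pos hK2 hcpos
        omega
    have hbR : (0:ℝ) < bb d := by exact_mod_cast hbpos
    have hcR : (0:ℝ) < cc (d+1) := by exact_mod_cast hcpos
    have hK1R : (0:ℝ) < K d := by exact_mod_cast hK1
    have hK2R : (0:ℝ) < K (d+1) := by exact_mod_cast hK2
    obtain ⟨hA, hB⟩ := hkey d
    have key1 : S d * (K (d+1) : ℝ) ≤ Real.exp ε * S (d+1) * K d := by
      have hm : (bb d : ℝ) * (S d * (K (d+1) : ℝ))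
          ≤ (bb d : ℝ) * (Real.exp ε * S (d+1) * K d) := by
        calc (bb d : ℝ) * (S d * (K (d+1) : ℝ))
            = ((bb d : ℝ) * S d) * K (d+1) := by ring
          _ ≤ (Real.exp ε * ((cc (d+1) : ℝ) * S (d+1))) * K (d+1) :=
              mul_le_mul_of_nonneg_right hA (Nat.cast_nonneg _)
          _ = (Real.exp ε * S (d+1)) * ((K (d+1) : ℝ) * cc (d+1)) := by ring
          _ = (Real.exp ε * S (d+1)) * ((K d : ℝ) * bb d) := by rw [← hcountK d]
          _ = (bb d : ℝ) * (Real.exp ε * S (d+1) * K d) := by ring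
      exact le_of_mul_le_mul_left hm hbR
    have key2 : S (d+1) * (K d : ℝ) ≤ Real.exp ε * S d * K (d+1) := by
      have hm : (cc (d+1) : ℝ) * (S (d+1) * (K d : ℝ))
          ≤ (cc (d+1) : ℝ) * (Real.exp ε * S d * K (d+1)) := by
        calc (cc (d+1) : ℝ) * (S (d+1) * (K d : ℝ))
            = ((cc (d+1) : ℝ) * S (d+1)) * K d := by ring
          _ ≤ (Real.exp ε * ((bb d : ℝ) * S d)) * K d :=
              mul_le_mul_of_nonneg_right hB (Nat.cast_nonneg _)
          _ = (Real.exp ε * S d) * ((K d : ℝ) * bb d) := by ring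
          _ = (Real.exp ε * S d) * ((K (d+1) : ℝ) * cc (d+1)) := by rw [hcountK d]
          _ = (cc (d+1) : ℝ) * (Real.exp ε * S d * K (d+1)) := by ring
      exact le_of_mul_le_mul_left hm hcR
    constructor
    · rw [hfdef]
      show S d / ((N:ℝ) * K d) ≤ Real.exp ε * (S (d+1) / ((N:ℝ) * K (d+1)))
      rw [mul_div_assoc']
      rw [div_le_div_iff₀ (mul_pos (Nat.cast_pos.mpr hNpos) hK1R) (mul_pos (Nat.cast_pos.mpr hNpos) hK2R)]
      calc S d * ((N:ℝ) * K (d+1)) = (N:ℝ) * (S d * K (d+1)) := by ring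
        _ ≤ (N:ℝ) * (Real.exp ε * S (d+1) * K d) :=
            mul_le_mul_of_nonneg_left key1 (Nat.cast_nonneg _)
        _ = Real.exp ε * S (d+1) * ((N:ℝ) * K d) := by ring
    · rw [hfdef]
      show S (d+1) / ((N:ℝ) * K (d+1)) ≤ Real.exp ε * (S d / ((N:ℝ) * K d))
      rw [mul_div_assoc']
      rw [div_le_div_iff₀ (mul_pos (Nat.cast_pos.mpr hNpos) hK2R) (mul_pos (Nat.cast_pos.mpr hNpos) hK1R)]
      calc S (d+1) * ((N:ℝ) * K d) = (N:ℝ) * (S (d+1) * K d) := by ring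
        _ ≤ (N:ℝ) * (Real.exp ε * S d * K (d+1)) :=
            mul_le_mul_of_nonneg_left key2 (Nat.cast_nonneg _)
        _ = Real.exp ε * S d * ((N:ℝ) * K (d+1)) := by ring
  have hdpf : ∀ i h : V, G.Adj i h → ∀ j : V,
      f (G.dist j i) ≤ Real.exp ε * f (G.dist j h) := by
    intro i h hadj j
    have h1 : G.dist j i ≤ G.dist j h + 1 := by
      have := hconn.dist_triangle (u := j) (v := h) (w := i)
      rw [SimpleGraph.dist_eq_one_iff_adj.mpr hadj.symm] at this
      omega
    have h2 : G.dist j h ≤ G.dist j i + 1 := by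
      have := hconn.dist_triangle (u := j) (v := i) (w := h)
      rw [SimpleGraph.dist_eq_one_iff_adj.mpr hadj] at this
      omega
    have hKi := hKd j i
    have hKh := hKd j h
    rcases (by omega : G.dist j i = G.dist j h ∨ G.dist j i = G.dist j h + 1
        ∨ G.dist j h = G.dist j i + 1) with heq | heq | heq
    · rw [heq]
      exact le_mul_of_one_le_left (hfnn _) (Real.one_le_exp hε.le)
    · rw [heq]
      rw [heq] at hKi
      exact (hstep (G.dist j h) hKh hKi).2
    · rw [heq]
      rw [heq] at hKh
      exact (hstep (G.dist j i) hKi hKh).1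
  have hbdd : ∀ g : V → ℝ, BddAbove (Set.range g) :=
    fun g => Set.Finite.bddAbove (Set.finite_range g)
  have hsupM' : ∀ j : V, (⨆ i, M' i (Sum.inl j)) = M' j (Sum.inl j) :=
    fun j => le_antisymm (ciSup_le fun i => hdiag j i)
      (le_ciSup (f := fun i => M' i (Sum.inl j)) (hbdd _) j)
  have hsupf : ∀ j : V, (⨆ i, f (G.dist j i)) = f 0 := by
    intro j
    refine le_antisymm (ciSup_le fun i => (hfle _).trans_eq hf0.symm) ?_
    have h := le_ciSup (hbdd fun i => f (G.dist j i)) j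
    simpa [SimpleGraph.dist_self] using h
  refine ⟨fun i => Sum.elim (fun j => f (G.dist j i)) (fun _ => 0), ?_, ?_, ?_, ?_, ?_, ?_⟩
  · rintro i (j | w)
    · exact hfnn _
    · exact le_refl 0
  · intro i
    rw [Fintype.sum_sum_type]
    simpa using hrowsum i
  · rintro i h (j | w) <;> simp only [Sum.elim_inl, Sum.elim_inr]
    · rw [SimpleGraph.dist_self]
      exact (hfle _).trans_eq hf0.symm
    · rw [SimpleGraph.dist_self]
      exact hfnn 0
  · intro i w; rfl
  · rintro i h hadj (j | w) <;> simp only [Sum.elim_inl, Sum.elim_inr]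
    · exact hdpf i h hadj j
    · simp
  · rw [Fintype.sum_sum_type, Fintype.sum_sum_type]
    simp only [Sum.elim_inl, Sum.elim_inr]
    have e1 : ∀ j : V, (⨆ i, f (G.dist j i)) = f 0 := hsupf
    have e2 : (⨆ _i : V, (0:ℝ)) = 0 := ciSup_const
    have e3 : ∀ w : W, (⨆ i, M' i (Sum.inr w)) = 0 := by
      intro w
      simp [hzero]
    calc (∑ j : V, ⨆ i, f (G.dist j i)) + ∑ w : W, ⨆ _i : V, (0:ℝ)
        = (∑ _j : V, f 0) + 0 := by
          rw [Finset.sum_congr rfl fun j _ => e1 j]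
          simp [e2]
      _ = (N : ℝ) * (t / N) := by rw [hf0]; simp [mul_comm, hNdef]
      _ = t := by field_simp
      _ = (∑ j : V, ⨆ i, M' i (Sum.inl j)) + ∑ w : W, ⨆ i, M' i (Sum.inr w) := by
          rw [Finset.sum_congr rfl fun j _ => (hsupM' j)]
          rw [Finset.sum_congr rfl fun w _ => (e3 w)]
          simp [htdef]

/-- **Step 2a of the matrix transformation.** Let `G` be a connected
finite distance-regular graph on `V`, and let `M'` be an `ε`-differentially private
channel matrix (with output alphabet `V ⊕ W`) whose column maxima are on the diagonal
and whose last `|W|` columns are zero. Then there is an `ε`-differentially private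
channel matrix `M''` whose diagonal entries all equal the global maximum entry, whose
last `|W|` columns are zero, and which has the same sum of column maxima (hence the
same a posteriori min-entropy under the uniform input distribution). -/
theorem dp_transform_distRegular {V W : Type*} [Fintype V] [Fintype W]
    (G : SimpleGraph V) (hconn : G.Connected) (hdr : IsDistRegular G)
    (ε : ℝ) (hε : 0 < ε) (M' : V → (V ⊕ W) → ℝ)
    (hnn : ∀ i b, 0 ≤ M' i b) (hrow : ∀ i, ∑ b, M' i b = 1)
    (hdp : ∀ i h, G.Adj i h → ∀ b, M' i b ≤ Real.exp ε * M' h b)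
    (hdiag : ∀ i h : V, M' h (Sum.inl i) ≤ M' i (Sum.inl i))
    (hzero : ∀ i w, M' i (Sum.inr w) = 0) :
    ∃ M'' : V → (V ⊕ W) → ℝ,
      (∀ i b, 0 ≤ M'' i b) ∧
      (∀ i, ∑ b, M'' i b = 1) ∧
      (∀ i h : V, ∀ b : V ⊕ W, M'' h b ≤ M'' i (Sum.inl i)) ∧
      (∀ i w, M'' i (Sum.inr w) = 0) ∧
      (∀ i h, G.Adj i h → ∀ b, M'' i b ≤ Real.exp ε * M'' h b) ∧
      (∑ b, ⨆ i, M'' i b) = (∑ b, ⨆ i, M' i b) := by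
  exact dp_transform_distRegular' G hconn hdr ε hε M' hnn hrow hdp hdiag hzero
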